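/- arXiv:2407.11556 — 2 statements merged into one kernel-verified Lean document; each statement's English description precedes it below -/
import Mathlib

section
/- Let n_P > 0 and d ≥ 0 be real (or natural) numbers, and let n_Pc, d_c be numbers with 0 ≤ n_Pc ≤ n_P and 0 ≤ d_c ≤ d. Then |(n_Pc + d_c)/(n_P + d) - n_Pc/n_P| ≤ 1/(n_P/d + 1) = d/(n_P + d) (when d > 0; the bound is 0 when d = 0). -/
/-- HPT accuracy theorem (Theorem 1): the absolute error between the HPT
estimate `(n_Pc + d_c)/(n_P + d)` and the true conditional probability
`n_Pc/n_P` is at most `d/(n_P + d)` (which equals `1/(n_P/d + 1)` when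
`d > 0`, and is `0` when `d = 0`). -/
theorem hpt_accuracy (nP nPc d dc : ℝ) (hnP : 0 < nP) (hd : 0 ≤ d)
    (hnPc0 : 0 ≤ nPc) (hnPc : nPc ≤ nP) (hdc0 : 0 ≤ dc) (hdc : dc ≤ d) :
    |(nPc + dc) / (nP + d) - nPc / nP| ≤ d / (nP + d) ∧
      (0 < d → d / (nP + d) = 1 / (nP / d + 1)) := by
  have hnPd : 0 < nP + d := by linarith
  constructor
  · have key : (nPc + dc) / (nP + d) - nPc / nP = (dc * nP - nPc * d) / (nP * (nP + d)) := by
      field_simp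
      ring
    rw [key, abs_div, abs_of_pos (mul_pos hnP hnPd)]
    rw [div_le_div_iff₀ (mul_pos hnP hnPd) hnPd]
    have h1 : dc * nP - nPc * d ≤ d * nP := by nlinarith
    have h2 : -(d * nP) ≤ dc * nP - nPc * d := by nlinarith
    have := abs_le.mpr ⟨h2, h1⟩
    nlinarith [abs_nonneg (dc * nP - nPc * d)]
  · intro hdpos
    field_simp
end

section
/- Let S = s_0 s_1 ... s_n be a string over a finite alphabet, drawn from a probability distribution on strings. Define cdf(P_0) = 0 and cdf(P_{k+1}) = cdf(P_k) + prob(P_k) · Σ_{c=0}^{s_{k+1}-1} prob(c | P_k), where P_k = s_0...s_k, prob(P_k) is the probability that a random string has prefix P_k, and prob(c|P_k) is the conditional probability that character c follows prefix P_k. Then cdf(P_n) equals the probability that a random string is lexicographically strictly less than S at some position ≤ n, i.e., the CDF of S under lexicographic order restricted to the first n characters. -/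
open MeasureTheory

set_option maxRecDepth 10000

/-- Recursive CDF formula (Eqn 1): with `prob k` the probability that a random
(infinite) string agrees with `S` on its first `k` characters, and
`condprob k c` the conditional probability that character `c` follows that
prefix, the recursion `cdf 0 = 0`,
`cdf (k+1) = cdf k + prob k · Σ_{c < s_{k+1}} condprob k c`
computes the probability that a random string is lexicographically strictly
less than `S` at some position `< n`. -/
theorem cdf_recursion (n : ℕ) (S : ℕ → Fin 256)
    (μ : Measure (ℕ → Fin 256)) [IsProbabilityMeasure μ]
    (prob : ℕ → ℝ) (condprob : ℕ → Fin 256 → ℝ) (cdf : ℕ → ℝ)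
    (hprob : ∀ k, prob k = (μ {t | ∀ i < k, t i = S i}).toReal)
    (hcond : ∀ k c, condprob k c =
      (μ {t | (∀ i < k, t i = S i) ∧ t k = c}).toReal / prob k)
    (hpos : ∀ k ≤ n, prob k ≠ 0)
    (hcdf0 : cdf 0 = 0)
    (hcdfS : ∀ k, cdf (k + 1) = cdf k +
      prob k * ∑ c ∈ Finset.univ.filter (fun c : Fin 256 => c < S k), condprob k c) :
    cdf n = (μ {t | ∃ j < n, (∀ i < j, t i = S i) ∧ t j < S j}).toReal := by
  have hMeas : ∀ k, MeasurableSet {t : ℕ → Fin 256 | ∀ i < k, t i = S i} := by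
    intro k
    have h : {t : ℕ → Fin 256 | ∀ i < k, t i = S i}
        = ⋂ i ∈ Set.Iio k, (fun t : ℕ → Fin 256 => t i) ⁻¹' {S i} := by
      ext t; simp
    rw [h]
    exact MeasurableSet.biInter (Set.to_countable _)
      (fun i _ => measurable_pi_apply i (measurableSet_singleton _))
  have hMeasEq : ∀ k (c : Fin 256),
      MeasurableSet {t : ℕ → Fin 256 | (∀ i < k, t i = S i) ∧ t k = c} := by
    intro k c
    have h : {t : ℕ → Fin 256 | (∀ i < k, t i = S i) ∧ t k = c}
        = {t | ∀ i < k, t i = S i} ∩ ((fun t : ℕ → Fin 256 => t k) ⁻¹' {c}) := by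
      ext t; simp [Set.mem_setOf_eq]
    rw [h]
    exact (hMeas k).inter (measurable_pi_apply k (measurableSet_singleton _))
  have key : ∀ m, m ≤ n →
      cdf m = (μ {t | ∃ j < m, (∀ i < j, t i = S i) ∧ t j < S j}).toReal := by
    intro m
    induction m with
    | zero =>
      intro _
      have h : {t : ℕ → Fin 256 | ∃ j < 0, (∀ i < j, t i = S i) ∧ t j < S j} = ∅ := by
        ext t; simp
      rw [h, measure_empty]
      simpa using hcdf0
    | succ k ih =>
      intro hk
      have hk' : k ≤ n := le_trans (Nat.le_succ k) hk
      set A := {t : ℕ → Fin 256 | ∃ j < k, (∀ i < j, t i = S i) ∧ t j < S j} with hA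
      set B := {t : ℕ → Fin 256 | (∀ i < k, t i = S i) ∧ t k < S k} with hB
      have hMeasB : MeasurableSet B := by
        have h : B = {t | ∀ i < k, t i = S i}
            ∩ ((fun t : ℕ → Fin 256 => t k) ⁻¹' (Set.Iio (S k))) := by
          ext t; simp [hB, Set.mem_setOf_eq]
        rw [h]
        exact (hMeas k).inter (measurable_pi_apply k measurableSet_Iio)
      have hunion : {t : ℕ → Fin 256 | ∃ j < k + 1, (∀ i < j, t i = S i) ∧ t j < S j}
          = A ∪ B := by
        ext t
        simp only [Set.mem_union, Set.mem_setOf_eq, hA, hB, Nat.lt_succ_iff_lt_or_eq]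
        constructor
        · rintro ⟨j, hj | rfl, h⟩
          · exact Or.inl ⟨j, hj, h⟩
          · exact Or.inr h
        · rintro (⟨j, hj, h⟩ | h)
          · exact ⟨j, Or.inl hj, h⟩
          · exact ⟨k, Or.inr rfl, h⟩
      have hdisj : Disjoint A B := by
        rw [Set.disjoint_left]
        rintro t ⟨j, hj, _, hlt⟩ ⟨hagree, _⟩
        exact (ne_of_lt hlt) (hagree j hj)
      have hBunion : B = ⋃ c ∈ Finset.univ.filter (fun c : Fin 256 => c < S k),
          {t : ℕ → Fin 256 | (∀ i < k, t i = S i) ∧ t k = c} := by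
        ext t
        simp only [Set.mem_iUnion, Finset.mem_filter, Finset.mem_univ, true_and,
          Set.mem_setOf_eq, hB]
        constructor
        · rintro ⟨h1, h2⟩; exact ⟨t k, h2, h1, rfl⟩
        · rintro ⟨c, hc, h1, rfl⟩; exact ⟨h1, hc⟩
      have hmuB : μ B = ∑ c ∈ Finset.univ.filter (fun c : Fin 256 => c < S k),
          μ {t : ℕ → Fin 256 | (∀ i < k, t i = S i) ∧ t k = c} := by
        rw [hBunion]
        refine measure_biUnion_finset ?_ (fun c _ => hMeasEq k c)
        intro c _ c' _ hne
        apply Set.disjoint_left.mpr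
        rintro t ⟨_, rfl⟩ ⟨_, h⟩
        exact hne h
      rw [hcdfS k, ih hk', hunion, measure_union hdisj hMeasB,
        ENNReal.toReal_add (measure_ne_top μ A) (measure_ne_top μ B), hmuB,
        ENNReal.toReal_sum (fun c _ => measure_ne_top μ _)]
      congr 1
      rw [Finset.mul_sum]
      refine Finset.sum_congr rfl (fun c _ => ?_)
      rw [hcond k c, mul_comm, div_mul_cancel₀ _ (hpos k hk')]
  exact key n le_rfl
end
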